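/- Take a_n = 1/(100 n³). Then for every bounded Lipschitz function f : [0,1) → ℂ, ∑_{n=1}^∞ ‖L_n f‖_Lip ≤ (1/2) ‖f‖_Lip, where (L_n f)(x) = v_n'(x) f(v_n(x)) + w_n'(x) f(w_n(x)). -/

import Mathlib

open MeasureTheory Set Filter

noncomputable section

namespace Gouezel

/-- `b a n = 4 * ∑_{k=1}^n a_k` (left endpoints of the intervals `I_n`). -/
def b (a : ℕ → ℝ) (n : ℕ) : ℝ := 4 * ∑ k ∈ Finset.range n, a (k + 1)

/-- `b_∞ = 4 * ∑_{n=1}^∞ a_n`. -/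
def binf (a : ℕ → ℝ) : ℝ := 4 * ∑' n : ℕ, a (n + 1)

/-- The length `|J| = 1 - b_∞` of the interval `J = [b_∞, 1)`. -/
def lenJ (a : ℕ → ℝ) : ℝ := 1 - binf a

/-- `v_n'(x) = a_n (1 + 2 cos²(2π n⁴ x))`. -/
def vd (a : ℕ → ℝ) (n : ℕ) (x : ℝ) : ℝ :=
  a n * (1 + 2 * Real.cos (2 * Real.pi * (n : ℝ) ^ 4 * x) ^ 2)

/-- `w_n'(x) = a_n (1 + 2 sin²(2π n⁴ x))`. -/
def wd (a : ℕ → ℝ) (n : ℕ) (x : ℝ) : ℝ :=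
  a n * (1 + 2 * Real.sin (2 * Real.pi * (n : ℝ) ^ 4 * x) ^ 2)

/-- The inverse branch `v_n(x) = b_{n-1} + ∫_0^x v_n'(t) dt`. -/
def v (a : ℕ → ℝ) (n : ℕ) (x : ℝ) : ℝ := b a (n - 1) + ∫ t in (0:ℝ)..x, vd a n t

/-- The inverse branch `w_n(x) = b_{n-1} + 2 a_n + ∫_0^x w_n'(t) dt`. -/
def w (a : ℕ → ℝ) (n : ℕ) (x : ℝ) : ℝ :=
  b a (n - 1) + 2 * a n + ∫ t in (0:ℝ)..x, wd a n t

/-- The affine inverse branches `u_j(x) = b_∞ + (j-1)|J|/N + (|J|/N) x`, `1 ≤ j ≤ N`. -/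
def u (a : ℕ → ℝ) (N : ℕ) (j : ℕ) (x : ℝ) : ℝ :=
  binf a + ((j : ℝ) - 1) * (lenJ a / N) + (lenJ a / N) * x

/-- The transfer operator on complex-valued functions. -/
def L (a : ℕ → ℝ) (N : ℕ) (f : ℝ → ℂ) (x : ℝ) : ℂ :=
  (∑' n : ℕ, ((vd a (n + 1) x : ℂ) * f (v a (n + 1) x)
      + (wd a (n + 1) x : ℂ) * f (w a (n + 1) x)))
    + ((lenJ a / (N : ℝ) : ℝ) : ℂ) * ∑ j ∈ Finset.range N, f (u a N (j + 1) x)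

/-- The transfer operator on real-valued functions. -/
def LR (a : ℕ → ℝ) (N : ℕ) (f : ℝ → ℝ) (x : ℝ) : ℝ :=
  (∑' n : ℕ, (vd a (n + 1) x * f (v a (n + 1) x) + wd a (n + 1) x * f (w a (n + 1) x)))
    + (lenJ a / N) * ∑ j ∈ Finset.range N, f (u a N (j + 1) x)

/-- The part `L_n` of the transfer operator coming from the branches `v_n, w_n`. -/
def Ln (a : ℕ → ℝ) (n : ℕ) (f : ℝ → ℂ) (x : ℝ) : ℂ :=
  (vd a n x : ℂ) * f (v a n x) + (wd a n x : ℂ) * f (w a n x)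

/-- Sup norm of `f` on `[0,1)`. -/
def supNorm (f : ℝ → ℂ) : ℝ := ⨆ x : Ico (0:ℝ) 1, ‖f x.1‖

/-- Best Lipschitz constant of `f` on `[0,1)` (the term at `x = y` is `0/0 = 0`). -/
def lipConst (f : ℝ → ℂ) : ℝ :=
  ⨆ p : Ico (0:ℝ) 1 × Ico (0:ℝ) 1, ‖f p.1.1 - f p.2.1‖ / |p.1.1 - p.2.1|

/-- Lipschitz norm `‖f‖_Lip = sup|f| + Lip(f)` on `[0,1)`. -/
def lipNorm (f : ℝ → ℂ) : ℝ := supNorm f + lipConst f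

/-- `f` is bounded and Lipschitz on `[0,1)`. -/
def BddLip (f : ℝ → ℂ) : Prop :=
  ∃ K : ℝ, (∀ x ∈ Ico (0:ℝ) 1, ‖f x‖ ≤ K) ∧
    ∀ x ∈ Ico (0:ℝ) 1, ∀ y ∈ Ico (0:ℝ) 1, ‖f x - f y‖ ≤ K * |x - y|

/-- The specific choice `a_n = 1/(100 n³)`. -/
def aa (n : ℕ) : ℝ := 1 / (100 * (n : ℝ) ^ 3)

/-- Standing hypotheses on the sequence `(a_n)`: positivity and `∑ a_n < 1/4`. -/
def StdHyp (a : ℕ → ℝ) : Prop :=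
  (∀ n : ℕ, 1 ≤ n → 0 < a n) ∧ Summable (fun n : ℕ => a (n + 1)) ∧
    (∑' n : ℕ, a (n + 1)) < 1 / 4

/-- `T : [0,1) → [0,1)` has the maps `v_n, w_n` (`n ≥ 1`) and `u_j` (`1 ≤ j ≤ N`)
as inverse branches. -/
def InverseBranches (a : ℕ → ℝ) (N : ℕ) (T : ℝ → ℝ) : Prop :=
  MapsTo T (Ico (0:ℝ) 1) (Ico (0:ℝ) 1) ∧
    ∀ x ∈ Ico (0:ℝ) 1,
      (∀ n : ℕ, 1 ≤ n → T (v a n x) = x ∧ T (w a n x) = x) ∧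
      (∀ j : ℕ, 1 ≤ j → j ≤ N → T (u a N j x) = x)

lemma aa_pos {m : ℕ} (hm : 1 ≤ m) : 0 < aa m := by
  have : (0:ℝ) < (m:ℝ) := by exact_mod_cast hm
  unfold aa; positivity

lemma vd_nonneg (m : ℕ) (hm : 1 ≤ m) (x : ℝ) : 0 ≤ vd aa m x := by
  have h := aa_pos hm
  unfold vd; nlinarith [sq_nonneg (Real.cos (2 * Real.pi * (m:ℝ) ^ 4 * x))]

lemma vd_le (m : ℕ) (hm : 1 ≤ m) (x : ℝ) : vd aa m x ≤ 3 * aa m := by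
  have h := aa_pos hm
  have := Real.cos_sq_le_one (2 * Real.pi * (m:ℝ) ^ 4 * x)
  unfold vd; nlinarith

lemma wd_nonneg (m : ℕ) (hm : 1 ≤ m) (x : ℝ) : 0 ≤ wd aa m x := by
  have h := aa_pos hm
  unfold wd; nlinarith [sq_nonneg (Real.sin (2 * Real.pi * (m:ℝ) ^ 4 * x))]

lemma wd_le (m : ℕ) (hm : 1 ≤ m) (x : ℝ) : wd aa m x ≤ 3 * aa m := by
  have h := aa_pos hm
  have := Real.sin_sq_le_one (2 * Real.pi * (m:ℝ) ^ 4 * x)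
  unfold wd; nlinarith

lemma vd_add_wd (m : ℕ) (x : ℝ) : vd aa m x + wd aa m x = 4 * aa m := by
  have h := Real.sin_sq_add_cos_sq (2 * Real.pi * (m:ℝ) ^ 4 * x)
  unfold vd wd; linear_combination 2 * aa m * h

lemma cos_lip (s t : ℝ) : |Real.cos s - Real.cos t| ≤ |s - t| := by
  rw [Real.cos_sub_cos]
  have h1 : |Real.sin ((s+t)/2)| ≤ 1 := Real.abs_sin_le_one _
  have h2 : |Real.sin ((s-t)/2)| ≤ |(s-t)/2| := Real.abs_sin_le_abs
  rw [abs_mul, abs_mul]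
  have : |(s-t)/2| = |s-t|/2 := by rw [abs_div]; norm_num
  rw [this] at h2
  have h0 : (0:ℝ) ≤ |s - t| := abs_nonneg _
  calc |(-2:ℝ)| * |Real.sin ((s+t)/2)| * |Real.sin ((s-t)/2)|
      ≤ 2 * 1 * (|s-t|/2) := by
        apply mul_le_mul _ h2 (abs_nonneg _) (by positivity)
        rw [abs_neg, abs_two]
        nlinarith [abs_nonneg (Real.sin ((s+t)/2))]
    _ = |s - t| := by ring

lemma vd_lip (m : ℕ) (hm : 1 ≤ m) (x y : ℝ) :
    |vd aa m x - vd aa m y| ≤ 8 * Real.pi * (m:ℝ)^4 * aa m * |x - y| := by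
  have ha := aa_pos hm
  set s := 2 * Real.pi * (m:ℝ) ^ 4 * x with hs
  set t := 2 * Real.pi * (m:ℝ) ^ 4 * y with ht
  have h1 : vd aa m x - vd aa m y = aa m * 2 * ((Real.cos s - Real.cos t) * (Real.cos s + Real.cos t)) := by
    unfold vd; ring
  have h2 : |Real.cos s + Real.cos t| ≤ 2 := by
    have := Real.abs_cos_le_one s; have := Real.abs_cos_le_one t
    calc |Real.cos s + Real.cos t| ≤ |Real.cos s| + |Real.cos t| := abs_add_le _ _
      _ ≤ 2 := by linarith
  have h3 : |s - t| = 2 * Real.pi * (m:ℝ)^4 * |x - y| := by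
    rw [hs, ht, ← mul_sub, abs_mul]
    congr 1
    rw [abs_of_nonneg]
    positivity
  calc |vd aa m x - vd aa m y| = aa m * 2 * (|Real.cos s - Real.cos t| * |Real.cos s + Real.cos t|) := by
        rw [h1, abs_mul, abs_mul, abs_mul, abs_of_nonneg ha.le, abs_two]
    _ ≤ aa m * 2 * (|s - t| * 2) := by
        apply mul_le_mul_of_nonneg_left _ (by positivity)
        apply mul_le_mul (cos_lip s t) h2 (abs_nonneg _) (abs_nonneg _)
    _ = 8 * Real.pi * (m:ℝ)^4 * aa m * |x - y| := by rw [h3]; ring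

lemma b_nonneg (n : ℕ) : 0 ≤ b aa n := by
  unfold b
  apply mul_nonneg (by norm_num)
  apply Finset.sum_nonneg
  intro k _
  exact le_of_lt (aa_pos (Nat.le_add_left 1 k))

lemma sum_inv_sq_le (n : ℕ) : ∑ k ∈ Finset.range n, (1:ℝ)/((k:ℝ)+1)^2 ≤ 2 := by
  have h : ∀ n : ℕ, ∑ k ∈ Finset.range (n+1), (1:ℝ)/((k:ℝ)+1)^2 ≤ 2 - 1/((n:ℝ)+1) := by
    intro n
    induction n with
    | zero => simp; norm_num
    | succ n ih =>
      rw [Finset.sum_range_succ]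
      have hn : (0:ℝ) < (n:ℝ)+1 := by positivity
      have hn2 : (0:ℝ) < (n:ℝ)+2 := by positivity
      have key : (1:ℝ)/((n:ℝ)+1+1)^2 ≤ 1/((n:ℝ)+1) - 1/((n:ℝ)+1+1) := by
        rw [div_sub_div _ _ (ne_of_gt hn) (by positivity), div_le_div_iff₀ (by positivity) (by positivity)]
        ring_nf
        nlinarith
      push_cast
      push_cast at ih key
      linarith
  cases n with
  | zero => simp
  | succ n =>
    have := h n
    have hn : (0:ℝ) < (n:ℝ)+1 := by positivity
    have : (0:ℝ) < 1/((n:ℝ)+1) := by positivity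
    linarith [h n]

lemma b_le (n : ℕ) : b aa n ≤ 2/25 := by
  unfold b
  have h : ∑ k ∈ Finset.range n, aa (k+1) ≤ ∑ k ∈ Finset.range n, (1/100) * ((1:ℝ)/((k:ℝ)+1)^2) := by
    apply Finset.sum_le_sum
    intro k _
    have e0 : aa (k+1) = 1/(100*((k:ℝ)+1)^3) := by unfold aa; push_cast; ring_nf
    have e1 : (1:ℝ)/100 * (1/((k:ℝ)+1)^2) = 1/(100*((k:ℝ)+1)^2) := by
      have : ((k:ℝ)+1)^2 ≠ 0 := by positivity
      field_simp
    rw [e0, e1]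
    apply one_div_le_one_div_of_le (by positivity)
    have hk : (0:ℝ) ≤ (k:ℝ) := Nat.cast_nonneg k
    nlinarith
  rw [← Finset.mul_sum] at h
  have := sum_inv_sq_le n
  linarith

lemma aa_le {m : ℕ} (hm : 1 ≤ m) : aa m ≤ 1/100 := by
  have h1 : (1:ℝ) ≤ (m:ℝ) := by exact_mod_cast hm
  unfold aa
  apply one_div_le_one_div_of_le (by norm_num : (0:ℝ) < 100)
  nlinarith [pow_le_pow_left₀ (by norm_num : (0:ℝ) ≤ 1) h1 3]

lemma cont_vd (m : ℕ) : Continuous (vd aa m) := by unfold vd; fun_prop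

lemma cont_wd (m : ℕ) : Continuous (wd aa m) := by unfold wd; fun_prop

lemma intv (m : ℕ) (x y : ℝ) : IntervalIntegrable (vd aa m) MeasureTheory.volume x y :=
  (cont_vd m).intervalIntegrable x y

lemma intw (m : ℕ) (x y : ℝ) : IntervalIntegrable (wd aa m) MeasureTheory.volume x y :=
  (cont_wd m).intervalIntegrable x y

lemma integ_bound (m : ℕ) (hm : 1 ≤ m) (g : ℝ → ℝ) (hgle : ∀ t, |g t| ≤ 3 * aa m)
    (hgint : ∀ x y : ℝ, IntervalIntegrable g MeasureTheory.volume x y) (x y : ℝ) :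
    |∫ t in y..x, g t| ≤ 3 * aa m * |x - y| := by
  have := intervalIntegral.norm_integral_le_of_norm_le_const
    (C := 3 * aa m) (f := g) (a := y) (b := x) (fun t _ => hgle t)
  simpa [Real.norm_eq_abs, abs_sub_comm x y] using this

lemma v_bounds (m : ℕ) (hm : 1 ≤ m) {x : ℝ} (hx : x ∈ Ico (0:ℝ) 1) :
    b aa (m-1) ≤ v aa m x ∧ v aa m x ≤ b aa (m-1) + 3 * aa m := by
  have h0 : 0 ≤ ∫ t in (0:ℝ)..x, vd aa m t :=
    intervalIntegral.integral_nonneg hx.1 (fun t _ => vd_nonneg m hm t)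
  have h1 : |∫ t in (0:ℝ)..x, vd aa m t| ≤ 3 * aa m * |x - 0| := by
    apply integ_bound m hm _ (fun t => ?_) (intv m)
    rw [abs_of_nonneg (vd_nonneg m hm t)]; exact vd_le m hm t
  have ha := aa_pos hm
  have h2 : (∫ t in (0:ℝ)..x, vd aa m t) ≤ 3 * aa m := by
    have hx1 : |x - 0| ≤ 1 := by rw [sub_zero, abs_of_nonneg hx.1]; exact hx.2.le
    calc (∫ t in (0:ℝ)..x, vd aa m t) ≤ |∫ t in (0:ℝ)..x, vd aa m t| := le_abs_self _
      _ ≤ 3 * aa m * |x - 0| := h1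
      _ ≤ 3 * aa m * 1 := by nlinarith
      _ = 3 * aa m := by ring
  constructor
  · unfold v; linarith
  · unfold v; linarith

lemma w_bounds (m : ℕ) (hm : 1 ≤ m) {x : ℝ} (hx : x ∈ Ico (0:ℝ) 1) :
    b aa (m-1) + 2 * aa m ≤ w aa m x ∧ w aa m x ≤ b aa (m-1) + 5 * aa m := by
  have h0 : 0 ≤ ∫ t in (0:ℝ)..x, wd aa m t :=
    intervalIntegral.integral_nonneg hx.1 (fun t _ => wd_nonneg m hm t)
  have h1 : |∫ t in (0:ℝ)..x, wd aa m t| ≤ 3 * aa m * |x - 0| := by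
    apply integ_bound m hm _ (fun t => ?_) (intw m)
    rw [abs_of_nonneg (wd_nonneg m hm t)]; exact wd_le m hm t
  have ha := aa_pos hm
  have h2 : (∫ t in (0:ℝ)..x, wd aa m t) ≤ 3 * aa m := by
    have hx1 : |x - 0| ≤ 1 := by rw [sub_zero, abs_of_nonneg hx.1]; exact hx.2.le
    calc (∫ t in (0:ℝ)..x, wd aa m t) ≤ |∫ t in (0:ℝ)..x, wd aa m t| := le_abs_self _
      _ ≤ 3 * aa m * |x - 0| := h1
      _ ≤ 3 * aa m := by nlinarith
  constructor
  · unfold w; linarith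
  · unfold w; linarith

lemma v_mem (m : ℕ) (hm : 1 ≤ m) {x : ℝ} (hx : x ∈ Ico (0:ℝ) 1) :
    v aa m x ∈ Ico (0:ℝ) 1 := by
  obtain ⟨h1, h2⟩ := v_bounds m hm hx
  have := b_nonneg (m-1); have := b_le (m-1); have := aa_le hm
  constructor
  · linarith
  · linarith

lemma w_mem (m : ℕ) (hm : 1 ≤ m) {x : ℝ} (hx : x ∈ Ico (0:ℝ) 1) :
    w aa m x ∈ Ico (0:ℝ) 1 := by
  obtain ⟨h1, h2⟩ := w_bounds m hm hx
  have := b_nonneg (m-1); have := b_le (m-1); have := aa_le hm; have := (aa_pos hm).le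
  constructor
  · linarith
  · linarith

lemma vw_dist (m : ℕ) (hm : 1 ≤ m) {x : ℝ} (hx : x ∈ Ico (0:ℝ) 1) :
    |v aa m x - w aa m x| ≤ 5 * aa m := by
  obtain ⟨h1, h2⟩ := v_bounds m hm hx
  obtain ⟨h3, h4⟩ := w_bounds m hm hx
  have := (aa_pos hm).le
  rw [abs_le]
  constructor <;> linarith

lemma v_diff (m : ℕ) (hm : 1 ≤ m) (x y : ℝ) :
    |v aa m x - v aa m y| ≤ 3 * aa m * |x - y| := by
  have h : v aa m x - v aa m y = ∫ t in y..x, vd aa m t := by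
    unfold v
    rw [add_sub_add_left_eq_sub]
    exact intervalIntegral.integral_interval_sub_left (intv m 0 x) (intv m 0 y)
  rw [h]
  apply integ_bound m hm _ (fun t => ?_) (intv m)
  rw [abs_of_nonneg (vd_nonneg m hm t)]; exact vd_le m hm t

lemma w_diff (m : ℕ) (hm : 1 ≤ m) (x y : ℝ) :
    |w aa m x - w aa m y| ≤ 3 * aa m * |x - y| := by
  have h : w aa m x - w aa m y = ∫ t in y..x, wd aa m t := by
    unfold w
    rw [add_sub_add_left_eq_sub]
    exact intervalIntegral.integral_interval_sub_left (intw m 0 x) (intw m 0 y)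
  rw [h]
  apply integ_bound m hm _ (fun t => ?_) (intw m)
  rw [abs_of_nonneg (wd_nonneg m hm t)]; exact wd_le m hm t

lemma key (f : ℝ → ℂ) (hf : BddLip f) (m : ℕ) (hm : 1 ≤ m) :
    lipNorm (Ln aa m f) ≤ (6 * aa m + (40 * Real.pi * (m:ℝ)^4 + 18) * aa m^2) * lipNorm f := by
  obtain ⟨K, hK1, hK2⟩ := hf
  have h0mem : (0:ℝ) ∈ Ico (0:ℝ) 1 := by constructor <;> norm_num
  have hK0 : 0 ≤ K := le_trans (norm_nonneg _) (hK1 0 h0mem)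
  have bd1 : BddAbove (Set.range fun x : Ico (0:ℝ) 1 => ‖f x.1‖) :=
    ⟨K, by rintro _ ⟨x, rfl⟩; exact hK1 x.1 x.2⟩
  have hS : ∀ z ∈ Ico (0:ℝ) 1, ‖f z‖ ≤ supNorm f := fun z hz => le_ciSup bd1 ⟨z, hz⟩
  have bd2 : BddAbove (Set.range fun p : Ico (0:ℝ) 1 × Ico (0:ℝ) 1 =>
      ‖f p.1.1 - f p.2.1‖ / |p.1.1 - p.2.1|) := by
    refine ⟨K, ?_⟩
    rintro _ ⟨p, rfl⟩
    by_cases h : p.1.1 = p.2.1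
    · simp only [h, sub_self, norm_zero, zero_div]
      exact hK0
    · rw [div_le_iff₀ (abs_pos.mpr (sub_ne_zero.mpr h))]
      exact hK2 p.1.1 p.1.2 p.2.1 p.2.2
  have hS0 : 0 ≤ supNorm f := Real.iSup_nonneg (fun x => norm_nonneg _)
  have hL0 : 0 ≤ lipConst f := Real.iSup_nonneg (fun p => div_nonneg (norm_nonneg _) (abs_nonneg _))
  have hLam : ∀ x ∈ Ico (0:ℝ) 1, ∀ y ∈ Ico (0:ℝ) 1, ‖f x - f y‖ ≤ lipConst f * |x - y| := by
    intro x hx y hy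
    by_cases h : x = y
    · simp [h]
    · have h1 : ‖f x - f y‖ / |x - y| ≤ lipConst f := le_ciSup bd2 (⟨⟨x,hx⟩,⟨y,hy⟩⟩)
      have h2 : 0 < |x - y| := abs_pos.mpr (sub_ne_zero.mpr h)
      calc ‖f x - f y‖ = (‖f x - f y‖/|x-y|) * |x-y| := by field_simp
        _ ≤ lipConst f * |x-y| := mul_le_mul_of_nonneg_right h1 h2.le
  have ha := aa_pos hm
  have hpi := Real.pi_pos
  have hsup : supNorm (Ln aa m f) ≤ 6 * aa m * supNorm f := by
    apply Real.iSup_le _ (by positivity)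
    rintro ⟨x, hx⟩
    have h1 := hS _ (v_mem m hm hx)
    have h2 := hS _ (w_mem m hm hx)
    have hv : |vd aa m x| ≤ 3 * aa m := by
      rw [abs_of_nonneg (vd_nonneg m hm x)]; exact vd_le m hm x
    have hw : |wd aa m x| ≤ 3 * aa m := by
      rw [abs_of_nonneg (wd_nonneg m hm x)]; exact wd_le m hm x
    calc ‖Ln aa m f x‖
        ≤ ‖(vd aa m x : ℂ) * f (v aa m x)‖ + ‖(wd aa m x : ℂ) * f (w aa m x)‖ := norm_add_le _ _
      _ = |vd aa m x| * ‖f (v aa m x)‖ + |wd aa m x| * ‖f (w aa m x)‖ := by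
          rw [norm_mul, norm_mul, Complex.norm_real, Complex.norm_real,
            Real.norm_eq_abs, Real.norm_eq_abs]
      _ ≤ (3 * aa m) * supNorm f + (3 * aa m) * supNorm f :=
          add_le_add (mul_le_mul hv h1 (norm_nonneg _) (by positivity))
            (mul_le_mul hw h2 (norm_nonneg _) (by positivity))
      _ = 6 * aa m * supNorm f := by ring
  have hlip : lipConst (Ln aa m f) ≤ (40 * Real.pi * (m:ℝ)^4 + 18) * aa m^2 * lipConst f := by
    apply Real.iSup_le _ (by positivity)
    rintro ⟨⟨x, hx⟩, ⟨y, hy⟩⟩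
    simp only
    by_cases hxy : x = y
    · simp only [hxy, sub_self, norm_zero, zero_div]
      positivity
    · have hxyp : 0 < |x - y| := abs_pos.mpr (sub_ne_zero.mpr hxy)
      rw [div_le_iff₀ hxyp]
      have hcoe : ((vd aa m x : ℂ)) + wd aa m x = (vd aa m y : ℂ) + wd aa m y := by
        norm_cast
        rw [vd_add_wd, vd_add_wd]
      have hid : Ln aa m f x - Ln aa m f y
          = ((vd aa m x - vd aa m y : ℝ) : ℂ) * (f (v aa m x) - f (w aa m x))
            + (vd aa m y : ℂ) * (f (v aa m x) - f (v aa m y))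
            + (wd aa m y : ℂ) * (f (w aa m x) - f (w aa m y)) := by
        simp only [Ln]
        push_cast
        linear_combination (f (w aa m x)) * hcoe
      have hvx := v_mem m hm hx
      have hvy := v_mem m hm hy
      have hwx := w_mem m hm hx
      have hwy := w_mem m hm hy
      have e1 : ‖((vd aa m x - vd aa m y : ℝ) : ℂ) * (f (v aa m x) - f (w aa m x))‖
          ≤ (8 * Real.pi * (m:ℝ)^4 * aa m * |x - y|) * (lipConst f * (5 * aa m)) := by
        rw [norm_mul, Complex.norm_real, Real.norm_eq_abs]
        apply mul_le_mul (vd_lip m hm x y) ?_ (norm_nonneg _) (by positivity)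
        calc ‖f (v aa m x) - f (w aa m x)‖ ≤ lipConst f * |v aa m x - w aa m x| :=
              hLam _ hvx _ hwx
          _ ≤ lipConst f * (5 * aa m) := mul_le_mul_of_nonneg_left (vw_dist m hm hx) hL0
      have e2 : ‖(vd aa m y : ℂ) * (f (v aa m x) - f (v aa m y))‖
          ≤ (3 * aa m) * (lipConst f * (3 * aa m * |x - y|)) := by
        rw [norm_mul, Complex.norm_real, Real.norm_eq_abs]
        apply mul_le_mul ?_ ?_ (norm_nonneg _) (by positivity)
        · rw [abs_of_nonneg (vd_nonneg m hm y)]; exact vd_le m hm y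
        · calc ‖f (v aa m x) - f (v aa m y)‖ ≤ lipConst f * |v aa m x - v aa m y| :=
              hLam _ hvx _ hvy
            _ ≤ lipConst f * (3 * aa m * |x - y|) :=
              mul_le_mul_of_nonneg_left (v_diff m hm x y) hL0
      have e3 : ‖(wd aa m y : ℂ) * (f (w aa m x) - f (w aa m y))‖
          ≤ (3 * aa m) * (lipConst f * (3 * aa m * |x - y|)) := by
        rw [norm_mul, Complex.norm_real, Real.norm_eq_abs]
        apply mul_le_mul ?_ ?_ (norm_nonneg _) (by positivity)
        · rw [abs_of_nonneg (wd_nonneg m hm y)]; exact wd_le m hm y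
        · calc ‖f (w aa m x) - f (w aa m y)‖ ≤ lipConst f * |w aa m x - w aa m y| :=
              hLam _ hwx _ hwy
            _ ≤ lipConst f * (3 * aa m * |x - y|) :=
              mul_le_mul_of_nonneg_left (w_diff m hm x y) hL0
      calc ‖Ln aa m f x - Ln aa m f y‖
          ≤ ‖((vd aa m x - vd aa m y : ℝ) : ℂ) * (f (v aa m x) - f (w aa m x))
              + (vd aa m y : ℂ) * (f (v aa m x) - f (v aa m y))‖
            + ‖(wd aa m y : ℂ) * (f (w aa m x) - f (w aa m y))‖ := by
            rw [hid]; exact norm_add_le _ _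
        _ ≤ (‖((vd aa m x - vd aa m y : ℝ) : ℂ) * (f (v aa m x) - f (w aa m x))‖
              + ‖(vd aa m y : ℂ) * (f (v aa m x) - f (v aa m y))‖)
            + ‖(wd aa m y : ℂ) * (f (w aa m x) - f (w aa m y))‖ :=
            add_le_add_left (norm_add_le _ _) _
        _ ≤ ((8 * Real.pi * (m:ℝ)^4 * aa m * |x - y|) * (lipConst f * (5 * aa m))
              + (3 * aa m) * (lipConst f * (3 * aa m * |x - y|)))
            + (3 * aa m) * (lipConst f * (3 * aa m * |x - y|)) := by
            exact add_le_add (add_le_add e1 e2) e3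
        _ = (40 * Real.pi * (m:ℝ)^4 + 18) * aa m^2 * lipConst f * |x - y| := by ring
  have hmr : (0:ℝ) < (m:ℝ) := by exact_mod_cast hm
  unfold lipNorm
  have t1 : 0 ≤ 6 * aa m * lipConst f := by positivity
  have t2 : 0 ≤ (40 * Real.pi * (m:ℝ)^4 + 18) * aa m^2 * supNorm f := by positivity
  nlinarith [hsup, hlip]

lemma coeff_le (m : ℕ) (hm : 1 ≤ m) :
    6 * aa m + (40 * Real.pi * (m:ℝ)^4 + 18) * aa m^2 ≤ 1/(10*(m:ℝ)^2) := by
  have ht1 : (1:ℝ) ≤ (m:ℝ) := by exact_mod_cast hm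
  have ht0 : (0:ℝ) < (m:ℝ) := by linarith
  have hpi := Real.pi_pos
  have hpi4 := Real.pi_le_four
  set t := (m:ℝ) with htdef
  have e0 : aa m = 1/(100*t^3) := rfl
  have A : 6 * aa m ≤ (6/100)/t^2 := by
    rw [e0, show (6:ℝ) * (1/(100*t^3)) = 6/(100*t^3) by ring,
      div_le_div_iff₀ (by positivity) (by positivity)]
    nlinarith [mul_nonneg (mul_nonneg (by norm_num : (0:ℝ) ≤ 600) (sq_nonneg t))
      (sub_nonneg.mpr ht1)]
  have B : 40 * Real.pi * t^4 * aa m^2 ≤ (160/10000)/t^2 := by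
    have eB : 40 * Real.pi * t^4 * aa m^2 = (40*Real.pi/10000)/t^2 := by
      rw [e0]; field_simp; ring
    rw [eB, div_le_div_iff₀ (by positivity) (by positivity)]
    nlinarith [sq_nonneg t]
  have C : 18 * aa m^2 ≤ (18/10000)/t^2 := by
    rw [e0, show (18:ℝ) * (1/(100*t^3))^2 = 18/(10000*t^6) by field_simp; ring,
      div_le_div_iff₀ (by positivity) (by positivity)]
    have h6 : t^2 ≤ t^6 := pow_le_pow_right₀ ht1 (by norm_num)
    nlinarith
  calc 6 * aa m + (40 * Real.pi * t^4 + 18) * aa m^2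
      = 6 * aa m + 40 * Real.pi * t^4 * aa m^2 + 18 * aa m^2 := by ring
    _ ≤ (6/100)/t^2 + (160/10000)/t^2 + (18/10000)/t^2 :=
      add_le_add (add_le_add A B) C
    _ = (778/10000)/t^2 := by rw [← add_div, ← add_div]; norm_num
    _ ≤ 1/(10*t^2) := by
      rw [show (1:ℝ)/(10*t^2) = (1/10)/t^2 by rw [div_div],
        div_le_div_iff_of_pos_right (by positivity : (0:ℝ) < t^2)]
      norm_num

/-- with `a_n = 1/(100 n³)`,
`∑_{n≥1} ‖L_n f‖_Lip ≤ (1/2) ‖f‖_Lip` for every bounded Lipschitz `f`. -/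
theorem stmt8 (f : ℝ → ℂ) (hf : BddLip f) :
    Summable (fun n : ℕ => lipNorm (Ln aa (n + 1) f)) ∧
    (∑' n : ℕ, lipNorm (Ln aa (n + 1) f)) ≤ (1 / 2) * lipNorm f := by
  have hnonneg : ∀ n : ℕ, 0 ≤ lipNorm (Ln aa (n + 1) f) := by
    intro n
    exact add_nonneg (Real.iSup_nonneg fun x => norm_nonneg _)
      (Real.iSup_nonneg fun p => div_nonneg (norm_nonneg _) (abs_nonneg _))
  have hL0 : 0 ≤ lipNorm f :=
    add_nonneg (Real.iSup_nonneg fun x => norm_nonneg _)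
      (Real.iSup_nonneg fun p => div_nonneg (norm_nonneg _) (abs_nonneg _))
  have hbd : ∀ n : ℕ, lipNorm (Ln aa (n+1) f) ≤ (1/(10*((n:ℝ)+1)^2)) * lipNorm f := by
    intro n
    have h1 := key f hf (n+1) (Nat.le_add_left 1 n)
    have h2 := coeff_le (n+1) (Nat.le_add_left 1 n)
    push_cast at h1 h2
    exact h1.trans (mul_le_mul_of_nonneg_right h2 hL0)
  have hpartial : ∀ N : ℕ, ∑ n ∈ Finset.range N, lipNorm (Ln aa (n+1) f)
      ≤ (1/2) * lipNorm f := by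
    intro N
    have hsum := sum_inv_sq_le N
    calc ∑ n ∈ Finset.range N, lipNorm (Ln aa (n+1) f)
        ≤ ∑ n ∈ Finset.range N, (1/(10*((n:ℝ)+1)^2)) * lipNorm f :=
        Finset.sum_le_sum fun n _ => hbd n
      _ = (1/10) * (∑ n ∈ Finset.range N, 1/((n:ℝ)+1)^2) * lipNorm f := by
        rw [← Finset.sum_mul, Finset.mul_sum]
        congr 1
        apply Finset.sum_congr rfl
        intro n _
        rw [← one_div_mul_one_div]
      _ ≤ (1/10) * 2 * lipNorm f := by
        apply mul_le_mul_of_nonneg_right _ hL0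
        linarith
      _ ≤ (1/2) * lipNorm f := by linarith
  exact ⟨summable_of_sum_range_le hnonneg hpartial,
    Real.tsum_le_of_sum_range_le hnonneg hpartial⟩

end Gouezel
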